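/- Let (n_1,...,n_k) be nonnegative integers summing to n, and set p(n_1,...,n_k) = (n!/(n_1!···n_k!)) · (α_1^{↑n_1}···α_k^{↑n_k})/((α_1+···+α_k)^{↑n}). If n_i/n → x_i with x_i > 0 and x_1+···+x_k = 1 as n → ∞, then n^{k−1} · p(n_1,...,n_k) converges to (Γ(α_1+···+α_k)/(Γ(α_1)···Γ(α_k))) · x_1^{α_1−1}···x_k^{α_k−1}. -/

import Mathlib

open Filter Finset

lemma asc_eval_prod (a : ℝ) (m : ℕ) :
    (ascPochhammer ℝ m).eval a = ∏ j ∈ Finset.range m, (a + j) := by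
  induction m with
  | zero => simp
  | succ m ih => rw [ascPochhammer_succ_eval, ih, Finset.prod_range_succ]

lemma gammaSeq_pos {a : ℝ} (ha : 0 < a) {m : ℕ} (hm : 1 ≤ m) : 0 < Real.GammaSeq a m := by
  have hm' : (0:ℝ) < m := by exact_mod_cast hm
  refine div_pos (mul_pos (Real.rpow_pos_of_pos hm' _) (by positivity)) ?_
  exact Finset.prod_pos fun j _ => by positivity

lemma asc_eval_eq {a : ℝ} (ha : 0 < a) {m : ℕ} (hm : 1 ≤ m) :
    (ascPochhammer ℝ m).eval a
      = (m:ℝ) ^ a * m.factorial / ((a + m) * Real.GammaSeq a m) := by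
  have hm' : (0:ℝ) < m := by exact_mod_cast hm
  have h : Real.GammaSeq a m
      = (m:ℝ) ^ a * m.factorial / ((ascPochhammer ℝ m).eval a * (a + m)) := by
    rw [Real.GammaSeq, Finset.prod_range_succ, ← asc_eval_prod]
  have h1 : 0 < (ascPochhammer ℝ m).eval a := ascPochhammer_pos _ _ ha
  have h2 : (0:ℝ) < (m:ℝ) ^ a * m.factorial := by positivity
  have h3 : (0:ℝ) < a + m := by positivity
  rw [h]
  field_simp

/-- Local limit of the Polya urn label-count probabilities towards the
Dirichlet density: if `N n i / n → x i` with `x i > 0` and `∑ x = 1`, then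
`n^(k-1) * p (N n)` converges to the Dirichlet density at `(x 1, …, x k)`. -/
theorem polya_counts_tendsto_dirichlet_density
    {k : ℕ} (hk : 1 ≤ k) (α : Fin k → ℝ) (hα : ∀ i, 0 < α i)
    (N : ℕ → Fin k → ℕ) (hN : ∀ n, ∑ i, N n i = n)
    (x : Fin k → ℝ) (hx : ∀ i, 0 < x i) (hxsum : ∑ i, x i = 1)
    (hlim : ∀ i, Tendsto (fun n => (N n i : ℝ) / n) atTop (nhds (x i))) :
    Tendsto
      (fun n : ℕ => (n : ℝ) ^ (k - 1) *
        (((n.factorial : ℝ) / ∏ i, ((N n i).factorial : ℝ)) *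
          ((∏ i, (ascPochhammer ℝ (N n i)).eval (α i)) /
            (ascPochhammer ℝ n).eval (∑ i, α i))))
      atTop
      (nhds ((Real.Gamma (∑ i, α i) / ∏ i, Real.Gamma (α i)) *
        ∏ i, x i ^ (α i - 1))) := by
  set s : ℝ := ∑ i, α i with hs
  have hspos : 0 < s := Finset.sum_pos (fun i _ => hα i) ⟨⟨0, hk⟩, Finset.mem_univ _⟩
  -- N · i → ∞
  have hNtop : ∀ i, Tendsto (fun n => N n i) atTop atTop := by
    intro i
    rw [← tendsto_natCast_atTop_iff (R := ℝ)]
    have h : Tendsto (fun n : ℕ => ((N n i : ℝ) / n) * n) atTop atTop :=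
      (hlim i).pos_mul_atTop (hx i) tendsto_natCast_atTop_atTop
    refine h.congr' ?_
    filter_upwards [eventually_ge_atTop 1] with n hn
    have hn' : (n:ℝ) ≠ 0 := by positivity
    field_simp
  -- the auxiliary sequence
  set F : ℕ → ℝ := fun n =>
    ((s + n) / n * Real.GammaSeq s n) *
      ∏ i, (((N n i : ℝ) / n) ^ α i / ((α i + (N n i : ℝ)) / n)
            / Real.GammaSeq (α i) (N n i)) with hF
  have hinv : Tendsto (fun n : ℕ => (n:ℝ)⁻¹) atTop (nhds 0) :=
    tendsto_inv_atTop_nhds_zero_nat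
  have h1 : Tendsto (fun n : ℕ => (s + n) / n) atTop (nhds 1) := by
    have : Tendsto (fun n : ℕ => s * (n:ℝ)⁻¹ + 1) atTop (nhds (s * 0 + 1)) :=
      ((tendsto_const_nhds).mul hinv).add tendsto_const_nhds
    rw [mul_zero, zero_add] at this
    refine this.congr' ?_
    filter_upwards [eventually_ge_atTop 1] with n hn
    have hn' : (n:ℝ) ≠ 0 := by positivity
    field_simp
  have hFlim : Tendsto F atTop
      (nhds ((1 * Real.Gamma s) *
        ∏ i, (x i ^ α i / x i / Real.Gamma (α i)))) := by
    refine (h1.mul (Real.GammaSeq_tendsto_Gamma s)).mul (tendsto_finset_prod _ fun i _ => ?_)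
    have ha : Tendsto (fun n : ℕ => ((N n i : ℝ) / n) ^ α i) atTop (nhds (x i ^ α i)) :=
      (hlim i).rpow_const (Or.inl (hx i).ne')
    have hb : Tendsto (fun n : ℕ => (α i + (N n i : ℝ)) / n) atTop (nhds (x i)) := by
      have : Tendsto (fun n : ℕ => α i * (n:ℝ)⁻¹ + (N n i : ℝ) / n) atTop
          (nhds (α i * 0 + x i)) := ((tendsto_const_nhds).mul hinv).add (hlim i)
      rw [mul_zero, zero_add] at this
      refine this.congr fun n => ?_
      rw [add_div]
      ring_nf
    have hc : Tendsto (fun n => Real.GammaSeq (α i) (N n i)) atTop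
        (nhds (Real.Gamma (α i))) :=
      (Real.GammaSeq_tendsto_Gamma (α i)).comp (hNtop i)
    exact (ha.div hb (hx i).ne').div hc (Real.Gamma_pos_of_pos (hα i)).ne'
  have hval : (1 * Real.Gamma s) * ∏ i, (x i ^ α i / x i / Real.Gamma (α i))
      = (Real.Gamma s / ∏ i, Real.Gamma (α i)) * ∏ i, x i ^ (α i - 1) := by
    have h2 : ∏ i, x i ^ (α i - 1) = ∏ i, (x i ^ α i / x i) :=
      Finset.prod_congr rfl fun i _ => Real.rpow_sub_one (hx i).ne' _
    rw [h2, Finset.prod_div_distrib, Finset.prod_div_distrib]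
    ring
  rw [← hval]
  refine hFlim.congr' ?_
  filter_upwards [eventually_ge_atTop 1,
    eventually_all.2 fun i => (hNtop i).eventually_ge_atTop 1] with n hn hNn
  have hn' : (0:ℝ) < n := by exact_mod_cast hn
  -- rewrite ascPochhammer values
  rw [asc_eval_eq hspos hn,
    Finset.prod_congr rfl (fun i _ => asc_eval_eq (hα i) (hNn i))]
  -- split products
  have e1 : ∏ i, ((N n i : ℝ) ^ α i * ((N n i).factorial : ℝ)
        / ((α i + N n i) * Real.GammaSeq (α i) (N n i)))
      = (∏ i, (N n i : ℝ) ^ α i) * (∏ i, ((N n i).factorial : ℝ))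
        / ((∏ i, (α i + (N n i : ℝ))) * ∏ i, Real.GammaSeq (α i) (N n i)) := by
    rw [Finset.prod_div_distrib, Finset.prod_mul_distrib, Finset.prod_mul_distrib]
  have e2 : ∏ i, (((N n i : ℝ) / n) ^ α i / ((α i + (N n i : ℝ)) / n)
        / Real.GammaSeq (α i) (N n i))
      = ((∏ i, (N n i : ℝ) ^ α i) / (n:ℝ) ^ s)
        / ((∏ i, (α i + (N n i : ℝ))) / (n:ℝ) ^ k)
        / ∏ i, Real.GammaSeq (α i) (N n i) := by
    have hdiv : ∀ i : Fin k, ((N n i : ℝ) / n) ^ α i = (N n i : ℝ) ^ α i / (n:ℝ) ^ α i :=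
      fun i => Real.div_rpow (Nat.cast_nonneg _) (Nat.cast_nonneg _) (α i)
    simp only [hdiv, Finset.prod_div_distrib, Finset.prod_const, Finset.card_univ,
      Fintype.card_fin]
    rw [hs, Real.rpow_sum_of_pos hn' α]
  rw [hF]
  simp only [e1, e2]
  -- nonvanishing facts
  have hnfac : ((n.factorial : ℝ)) ≠ 0 := by positivity
  have hB : (∏ i, ((N n i).factorial : ℝ)) ≠ 0 :=
    (Finset.prod_pos fun i _ => by exact_mod_cast (N n i).factorial_pos).ne'
  have hC : (∏ i, (α i + (N n i : ℝ))) ≠ 0 :=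
    (Finset.prod_pos fun i _ => add_pos_of_pos_of_nonneg (hα i) (Nat.cast_nonneg _)).ne'
  have hD : (∏ i, Real.GammaSeq (α i) (N n i)) ≠ 0 :=
    (Finset.prod_pos fun i _ => gammaSeq_pos (hα i) (hNn i)).ne'
  have hE : ((n:ℝ) ^ s) ≠ 0 := (Real.rpow_pos_of_pos hn' _).ne'
  have hGs : Real.GammaSeq s n ≠ 0 := (gammaSeq_pos hspos hn).ne'
  have hsn : s + (n:ℝ) ≠ 0 := (add_pos_of_pos_of_nonneg hspos (Nat.cast_nonneg _)).ne'
  have hA : (∏ i, (N n i : ℝ) ^ α i) ≠ 0 := by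
    refine (Finset.prod_pos fun i _ => Real.rpow_pos_of_pos ?_ _).ne'
    exact_mod_cast hNn i
  have hpow : (n:ℝ) ^ (k - 1) * (n:ℝ) = (n:ℝ) ^ k := by
    rw [← pow_succ, Nat.sub_add_cancel hk]
  field_simp
  rw [← hpow]
  ring
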